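/- Let 𝒳, 𝒴, 𝒮 be finite nonempty sets and let T assign to each i,k ∈ 𝒮, y ∈ 𝒴, x ∈ 𝒳 a nonnegative real T_{ik}^{y|x} with ∑_{k∈𝒮} ∑_{y∈𝒴} T_{ik}^{y|x} = 1 for every i ∈ 𝒮 and x ∈ 𝒳. For each i ∈ 𝒮 let s_i be the unit vector in the real Euclidean space indexed by functions g : 𝒳 → 𝒴 × 𝒮 with coordinate ∏_{x∈𝒳} √(T_{i,(g x).2}^{(g x).1 | x}) at g. Suppose T is step-wise inefficient: there exist i ≠ j in 𝒮 such that for every x ∈ 𝒳 there exist y ∈ 𝒴 and k ∈ 𝒮 with T_{ik}^{y|x} > 0 and T_{jk}^{y|x} > 0. Let p : 𝒮 → ℝ satisfy p_i > 0 for all i and ∑_i p_i = 1, and let ρ = ∑_{i∈𝒮} p_i · s_i s_iᵀ (a real symmetric matrix) with eigenvalues μ_k. Then −∑_k μ_k log μ_k < −∑_{i∈𝒮} p_i log p_i. -/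

import Mathlib

set_option maxHeartbeats 1000000 in
/-- Reduced Complexity: For stochastic transition elements `T` that
are step-wise inefficient (two distinct causal states `i ≠ j` sharing, for every
input `x`, a common possible transition) and any strictly positive distribution
`p` on causal states, the von Neumann entropy of the mixture
`ρ = ∑ i, p i • |s i⟩⟨s i|` of quantum causal states is strictly less than the
Shannon entropy of `p`. -/
theorem stmt6 {𝒳 𝒴 𝒮 : Type*} [Fintype 𝒳] [Fintype 𝒴] [Fintype 𝒮]
    [DecidableEq 𝒳] [DecidableEq 𝒴] [DecidableEq 𝒮]
    [Nonempty 𝒳] [Nonempty 𝒴] [Nonempty 𝒮]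
    (T : 𝒮 → 𝒮 → 𝒴 → 𝒳 → ℝ) (hT : ∀ i k y x, 0 ≤ T i k y x)
    (hstoch : ∀ i x, ∑ k : 𝒮, ∑ y : 𝒴, T i k y x = 1)
    (s : 𝒮 → EuclideanSpace ℝ (𝒳 → 𝒴 × 𝒮))
    (hs : ∀ i g, s i g = ∏ x : 𝒳, Real.sqrt (T i (g x).2 (g x).1 x))
    (hineff : ∃ i j : 𝒮, i ≠ j ∧
      ∀ x : 𝒳, ∃ y : 𝒴, ∃ k : 𝒮, 0 < T i k y x ∧ 0 < T j k y x)
    (p : 𝒮 → ℝ) (hp : ∀ i, 0 < p i) (hpsum : ∑ i, p i = 1)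
    (ρ : Matrix (𝒳 → 𝒴 × 𝒮) (𝒳 → 𝒴 × 𝒮) ℝ)
    (hρdef : ρ = ∑ i, p i • Matrix.of (fun g g' => s i g * s i g'))
    (hρ : ρ.IsHermitian) :
    -∑ k, hρ.eigenvalues k * Real.log (hρ.eigenvalues k) <
      -∑ i, p i * Real.log (p i) := by
  classical
  obtain ⟨i₀, j₀, hij, hw⟩ := hineff

  -- bridge between inner product and plain sums
  have hdot : ∀ u v : EuclideanSpace ℝ (𝒳 → 𝒴 × 𝒮), (inner ℝ u v : ℝ) = ∑ g, u g * v g := by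
    intro u v; simp [PiLp.inner_apply, RCLike.inner_apply, conj_trivial]; exact Finset.sum_congr rfl fun _ _ => mul_comm _ _
  -- entries of ρ
  have hρapp : ∀ g g', ρ g g' = ∑ l, p l * (s l g * s l g') := by
    intro g g'; rw [hρdef]; simp [Matrix.sum_apply, smul_eq_mul]
  -- s entries are nonneg
  have hsnn : ∀ i g, 0 ≤ s i g := by
    intro i g; rw [hs]; exact Finset.prod_nonneg fun x _ => Real.sqrt_nonneg _
  -- overlaps
  set P : 𝒮 → 𝒮 → ℝ := fun i j => ∑ g, s i g * s j g with hP
  have hPsymm : ∀ i j, P i j = P j i := by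
    intro i j; exact Finset.sum_congr rfl fun g _ => mul_comm _ _
  have hPnn : ∀ i j, 0 ≤ P i j := by
    intro i j; exact Finset.sum_nonneg fun g _ => mul_nonneg (hsnn i g) (hsnn j g)
  have hPone : ∀ i, P i i = 1 := by
    intro i
    have h1 : ∀ g : 𝒳 → 𝒴 × 𝒮, s i g * s i g = ∏ x : 𝒳, T i (g x).2 (g x).1 x := by
      intro g
      rw [hs, ← Finset.prod_mul_distrib]
      exact Finset.prod_congr rfl fun x _ => Real.mul_self_sqrt (hT _ _ _ _)
    calc P i i = ∑ g : 𝒳 → 𝒴 × 𝒮, ∏ x : 𝒳, T i (g x).2 (g x).1 x :=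
          Finset.sum_congr rfl fun g _ => h1 g
      _ = ∏ x : 𝒳, ∑ z : 𝒴 × 𝒮, T i z.2 z.1 x :=
          (Fintype.prod_sum (κ := fun _ : 𝒳 => 𝒴 × 𝒮) (fun x z => T i z.2 z.1 x)).symm
      _ = 1 := by
          rw [Finset.prod_eq_one]
          intro x _
          rw [Fintype.sum_prod_type, Finset.sum_comm]
          exact hstoch i x
  have hc : 0 < P i₀ j₀ := by
    have h1 : ∀ g : 𝒳 → 𝒴 × 𝒮, s i₀ g * s j₀ g
        = ∏ x : 𝒳, (Real.sqrt (T i₀ (g x).2 (g x).1 x) * Real.sqrt (T j₀ (g x).2 (g x).1 x)) := by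
      intro g; rw [hs, hs, ← Finset.prod_mul_distrib]
    have h2 : P i₀ j₀
        = ∏ x : 𝒳, ∑ z : 𝒴 × 𝒮, (Real.sqrt (T i₀ z.2 z.1 x) * Real.sqrt (T j₀ z.2 z.1 x)) := by
      rw [hP]
      calc (∑ g : 𝒳 → 𝒴 × 𝒮, s i₀ g * s j₀ g)
          = ∑ g : 𝒳 → 𝒴 × 𝒮, ∏ x : 𝒳, (Real.sqrt (T i₀ (g x).2 (g x).1 x) * Real.sqrt (T j₀ (g x).2 (g x).1 x)) :=
            Finset.sum_congr rfl fun g _ => h1 g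
        _ = _ := (Fintype.prod_sum (κ := fun _ : 𝒳 => 𝒴 × 𝒮)
            (fun x z => Real.sqrt (T i₀ z.2 z.1 x) * Real.sqrt (T j₀ z.2 z.1 x))).symm
    rw [h2]
    apply Finset.prod_pos
    intro x _
    obtain ⟨y, k, h₁, h₂⟩ := hw x
    have hterm : 0 < Real.sqrt (T i₀ k y x) * Real.sqrt (T j₀ k y x) :=
      mul_pos (Real.sqrt_pos.2 h₁) (Real.sqrt_pos.2 h₂)
    calc (0:ℝ) < Real.sqrt (T i₀ (y,k).2 (y,k).1 x) * Real.sqrt (T j₀ (y,k).2 (y,k).1 x) := hterm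
      _ ≤ _ := Finset.single_le_sum
          (f := fun z : 𝒴 × 𝒮 => Real.sqrt (T i₀ z.2 z.1 x) * Real.sqrt (T j₀ z.2 z.1 x))
          (fun z _ => mul_nonneg (Real.sqrt_nonneg _) (Real.sqrt_nonneg _)) (Finset.mem_univ (y,k))
  -- the fundamental quadratic form identity
  have dotrho : ∀ u v : (𝒳 → 𝒴 × 𝒮) → ℝ, ∑ g, u g * (ρ.mulVec v) g
      = ∑ l, p l * (∑ g, u g * s l g) * (∑ g, s l g * v g) := by
    intro u v
    have hgg : ∀ g, u g * (ρ.mulVec v) g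
        = ∑ l, ∑ g', u g * (p l * (s l g * s l g') * v g') := by
      intro g
      simp only [Matrix.mulVec, dotProduct]
      rw [Finset.mul_sum, Finset.sum_comm]
      refine Finset.sum_congr rfl fun g' _ => ?_
      rw [hρapp, Finset.sum_mul, Finset.mul_sum]
    rw [Finset.sum_congr rfl fun g _ => hgg g, Finset.sum_comm]
    refine Finset.sum_congr rfl fun l _ => ?_
    calc ∑ g : 𝒳 → 𝒴 × 𝒮, ∑ g' : 𝒳 → 𝒴 × 𝒮, u g * (p l * (s l g * s l g') * v g')
        = ∑ g : 𝒳 → 𝒴 × 𝒮, ∑ g' : 𝒳 → 𝒴 × 𝒮, p l * ((u g * s l g) * (s l g' * v g')) :=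
          Finset.sum_congr rfl fun g _ => Finset.sum_congr rfl fun g' _ => by ring
      _ = p l * ∑ g : 𝒳 → 𝒴 × 𝒮, ∑ g' : 𝒳 → 𝒴 × 𝒮, (u g * s l g) * (s l g' * v g') := by
          rw [Finset.mul_sum]
          exact Finset.sum_congr rfl fun g _ => by rw [Finset.mul_sum]
      _ = p l * ((∑ g : 𝒳 → 𝒴 × 𝒮, u g * s l g) * (∑ g' : 𝒳 → 𝒴 × 𝒮, s l g' * v g')) := by
          rw [Finset.sum_mul_sum]
      _ = p l * (∑ g : 𝒳 → 𝒴 × 𝒮, u g * s l g) * (∑ g : 𝒳 → 𝒴 × 𝒮, s l g * v g) := by ring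
  -- eigen data
  set μ : (𝒳 → 𝒴 × 𝒮) → ℝ := hρ.eigenvalues with hμ
  set e := hρ.eigenvectorBasis with he
  set a : (𝒳 → 𝒴 × 𝒮) → 𝒮 → ℝ := fun k i => ∑ g, (e k) g * s i g with ha
  -- Fact I
  have factI : ∀ k k' : 𝒳 → 𝒴 × 𝒮, ∑ i, p i * a k i * a k' i = if k = k' then μ k else 0 := by
    intro k k'
    have h2 := hρ.mulVec_eigenvectorBasis k'
    rw [← he, ← hμ] at h2
    have horth := orthonormal_iff_ite.mp e.orthonormal k k'
    calc ∑ i, p i * a k i * a k' i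
        = ∑ g, (e k) g * (ρ.mulVec ⇑(e k')) g := by
          rw [dotrho]
          refine Finset.sum_congr rfl fun l _ => ?_
          simp only [ha]
          congr 1
          exact Finset.sum_congr rfl fun g _ => mul_comm _ _
      _ = ∑ g, (e k) g * (μ k' • ⇑(e k')) g := by rw [h2]
      _ = μ k' * ∑ g : 𝒳 → 𝒴 × 𝒮, (e k) g * (e k') g := by
          rw [Finset.mul_sum]
          refine Finset.sum_congr rfl fun g _ => ?_
          simp only [Pi.smul_apply, smul_eq_mul]; ring
      _ = μ k' * (inner ℝ (e k) (e k') : ℝ) := by rw [hdot (e k) (e k')]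
      _ = if k = k' then μ k else 0 := by
          rw [horth]
          split_ifs with h
          · rw [h, mul_one]
          · rw [mul_zero]
  -- Parseval
  have parseval : ∀ i j, ∑ k, a k i * a k j = P i j := by
    intro i j
    calc ∑ k, a k i * a k j
        = ∑ k, (inner ℝ (s i) (e k) : ℝ) * (inner ℝ (e k) (s j)) := by
          refine Finset.sum_congr rfl fun k _ => ?_
          rw [hdot (s i) (e k), hdot (e k) (s j)]
          simp only [ha]
          congr 1
          exact Finset.sum_congr rfl fun g _ => mul_comm _ _
      _ = (inner ℝ (s i) (s j) : ℝ) := e.sum_inner_mul_inner (s i) (s j)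
      _ = P i j := by rw [hdot (s i) (s j)]
  -- Fact A
  have factA : ∀ (k : 𝒳 → 𝒴 × 𝒮) (j : 𝒮), μ k * a k j = ∑ l, p l * a k l * P l j := by
    intro k j
    have h2 := hρ.mulVec_eigenvectorBasis k
    rw [← he, ← hμ] at h2
    have hdj : ∑ g, (s j) g * (ρ.mulVec ⇑(e k)) g = μ k * a k j := by
      rw [h2]
      simp only [ha]
      rw [Finset.mul_sum]
      refine Finset.sum_congr rfl fun g _ => ?_
      simp only [Pi.smul_apply, smul_eq_mul]
      ring
    rw [← hdj, dotrho]
    refine Finset.sum_congr rfl fun l _ => ?_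
    have e1 : ∑ g, (s j) g * s l g = P l j := by
      simp only [hP]
      exact Finset.sum_congr rfl fun g _ => mul_comm _ _
    have e2 : (∑ g, s l g * (e k : EuclideanSpace ℝ (𝒳 → 𝒴 × 𝒮)) g) = a k l := by
      simp only [ha]
      exact Finset.sum_congr rfl fun g _ => mul_comm _ _
    rw [e1, e2]
    ring
  set q : (𝒳 → 𝒴 × 𝒮) → 𝒮 → ℝ := fun k i => p i * (a k i)^2 with hq
  have hqnn : ∀ k i, 0 ≤ q k i := fun k i => mul_nonneg (hp i).le (sq_nonneg _)
  have hrow : ∀ k, ∑ i, q k i = μ k := by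
    intro k
    have := factI k k
    rw [if_pos rfl] at this
    rw [← this]
    exact Finset.sum_congr rfl fun i _ => by simp only [hq]; ring
  have hcol : ∀ i, ∑ k, q k i = p i := by
    intro i
    have : ∑ k, q k i = p i * ∑ k, a k i * a k i := by
      rw [Finset.mul_sum]; exact Finset.sum_congr rfl fun k _ => by simp only [hq]; ring
    rw [this, parseval, hPone, mul_one]
  have hμnn : ∀ k, 0 ≤ μ k := by
    intro k; rw [← hrow k]; exact Finset.sum_nonneg fun i _ => hqnn k i
  -- Bessel
  have hdot2 : ∀ u v : EuclideanSpace ℝ 𝒮, (inner ℝ u v : ℝ) = ∑ l, u l * v l := by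
    intro u v; simp [PiLp.inner_apply, RCLike.inner_apply, conj_trivial]; exact Finset.sum_congr rfl fun _ _ => mul_comm _ _
  have bessel : ∀ i, ∑ k, q k i / μ k ≤ 1 := by
    intro i
    set v : {k : 𝒳 → 𝒴 × 𝒮 // 0 < μ k} → EuclideanSpace ℝ 𝒮 :=
      fun k => WithLp.toLp 2 (fun l => Real.sqrt (p l) * a (↑k) l / Real.sqrt (μ ↑k)) with hv
    have hortho : Orthonormal ℝ v := by
      rw [orthonormal_iff_ite]
      intro k k'
      have hinner : (inner ℝ (v k) (v k') : ℝ)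
          = (∑ l, p l * a (↑k) l * a (↑k') l) / (Real.sqrt (μ ↑k) * Real.sqrt (μ ↑k')) := by
        rw [hdot2, Finset.sum_div]
        refine Finset.sum_congr rfl fun l _ => ?_
        simp only [hv]
        rw [div_mul_div_comm]
        congr 1
        linear_combination (a (↑k) l * a (↑k') l) * Real.mul_self_sqrt (hp l).le
      rw [hinner, factI]
      rcases eq_or_ne k k' with h | h
      · rw [if_pos h, if_pos (by rw [h])]
        subst h
        rw [Real.mul_self_sqrt (hμnn ↑k), div_self (k.2).ne']
      · rw [if_neg h, if_neg (fun hh => h (Subtype.ext hh)), zero_div]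
    have hb := hortho.sum_inner_products_le (s := Finset.univ) (EuclideanSpace.single i (1:ℝ))
    have hx : ‖EuclideanSpace.single i (1:ℝ)‖ ^ 2 = 1 := by
      rw [EuclideanSpace.norm_single]; norm_num
    have hterm : ∀ k : {k : 𝒳 → 𝒴 × 𝒮 // 0 < μ k},
        ‖(inner ℝ (v k) (EuclideanSpace.single i (1:ℝ)) : ℝ)‖ ^ 2 = q (↑k) i / μ ↑k := by
      intro k
      have h1 : (inner ℝ (v k) (EuclideanSpace.single i (1:ℝ)) : ℝ) = v k i := by
        rw [hdot2]
        simp [EuclideanSpace.single_apply, mul_ite]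
      rw [h1, Real.norm_eq_abs, sq_abs]
      simp only [hv, hq]
      rw [div_pow, mul_pow, Real.sq_sqrt (hp i).le, Real.sq_sqrt (hμnn ↑k)]
    rw [hx] at hb
    rw [Finset.sum_congr rfl (fun k _ => hterm k)] at hb
    have hsum : ∑ k : {k : 𝒳 → 𝒴 × 𝒮 // 0 < μ k}, q (↑k) i / μ ↑k = ∑ k, q k i / μ k := by
      rw [← Finset.sum_subtype (Finset.univ.filter (fun k => 0 < μ k))
        (fun k => by simp) (fun k => q k i / μ k)]
      exact Finset.sum_filter_of_ne fun k _ hne => by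
        rcases (hμnn k).lt_or_eq with h | h
        · exact h
        · exact absurd (by rw [← h, div_zero]) hne
    rw [hsum] at hb
    exact hb
  -- main case split
  by_cases Heq : ∀ (k : 𝒳 → 𝒴 × 𝒮) (i : 𝒮), 0 < q k i → μ k = p i
  · -- equality case: contradiction
    exfalso
    have h1 : ∀ k, μ k * a k i₀ = p i₀ * a k i₀ := by
      intro k
      rcases eq_or_ne (a k i₀) 0 with h | h
      · rw [h, mul_zero, mul_zero]
      · have : 0 < q k i₀ := by
          rw [hq]; exact mul_pos (hp i₀) (by positivity)
        rw [Heq k i₀ this]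
    have hL : ∑ k, (μ k * a k i₀) * a k j₀ = p i₀ * P i₀ j₀ := by
      calc ∑ k, (μ k * a k i₀) * a k j₀ = ∑ k, p i₀ * (a k i₀ * a k j₀) := by
            exact Finset.sum_congr rfl fun k _ => by rw [h1 k]; ring
        _ = p i₀ * P i₀ j₀ := by rw [← Finset.mul_sum, parseval]
    have hR : ∑ k, (μ k * a k i₀) * a k j₀ = ∑ l, p l * P l i₀ * P l j₀ := by
      calc ∑ k, (μ k * a k i₀) * a k j₀
          = ∑ k, ∑ l, (p l * a k l * P l i₀) * a k j₀ := by
            refine Finset.sum_congr rfl fun k _ => ?_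
            rw [factA k i₀, Finset.sum_mul]
        _ = ∑ l, ∑ k, (p l * a k l * P l i₀) * a k j₀ := Finset.sum_comm
        _ = ∑ l, p l * P l i₀ * P l j₀ := by
            refine Finset.sum_congr rfl fun l _ => ?_
            rw [← parseval l j₀, Finset.mul_sum]
            exact Finset.sum_congr rfl fun k _ => by ring
    have hge : ∑ l, p l * P l i₀ * P l j₀ ≥ p i₀ * P i₀ i₀ * P i₀ j₀ + p j₀ * P j₀ i₀ * P j₀ j₀ := by
      have hsub : ({i₀, j₀} : Finset 𝒮) ⊆ Finset.univ := Finset.subset_univ _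
      have := Finset.sum_le_sum_of_subset_of_nonneg hsub
        (f := fun l => p l * P l i₀ * P l j₀)
        (fun l _ _ => mul_nonneg (mul_nonneg (hp l).le (hPnn l i₀)) (hPnn l j₀))
      rw [Finset.sum_pair hij] at this
      exact this
    rw [hPone, hPone, mul_one, mul_one, hPsymm j₀ i₀] at hge
    rw [hL] at hR
    nlinarith [hc, hp j₀, hp i₀]
  · -- strict case
    push_neg at Heq
    obtain ⟨k₀, i₁, hq₀, hne⟩ := Heq
    set F : (𝒳 → 𝒴 × 𝒮) → 𝒮 → ℝ := fun k i => q k i * (Real.log (μ k) - Real.log (p i)) with hF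
    set G : (𝒳 → 𝒴 × 𝒮) → 𝒮 → ℝ := fun k i => q k i - p i * (q k i / μ k) with hG
    have key1 : ∀ (k : 𝒳 → 𝒴 × 𝒮) (i : 𝒮), G k i ≤ F k i := by
      intro k i
      rcases eq_or_lt_of_le (hqnn k i) with h | h
      · simp only [hF, hG, ← h]; simp
      · have hμpos : 0 < μ k := by
          calc (0:ℝ) < q k i := h
            _ ≤ ∑ i', q k i' := Finset.single_le_sum (fun i' _ => hqnn k i') (Finset.mem_univ i)
            _ = μ k := hrow k
        have hx : (0:ℝ) < p i / μ k := div_pos (hp i) hμpos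
        have hlog := Real.log_le_sub_one_of_pos hx
        rw [Real.log_div (hp i).ne' hμpos.ne'] at hlog
        simp only [hF, hG]
        have : p i * (q k i / μ k) = q k i * (p i / μ k) := by ring
        rw [this]
        nlinarith [h.le]
    have key2 : G k₀ i₁ < F k₀ i₁ := by
      have hμpos : 0 < μ k₀ := by
        calc (0:ℝ) < q k₀ i₁ := hq₀
          _ ≤ ∑ i', q k₀ i' := Finset.single_le_sum (fun i' _ => hqnn k₀ i') (Finset.mem_univ i₁)
          _ = μ k₀ := hrow k₀
      have hx : (0:ℝ) < p i₁ / μ k₀ := div_pos (hp i₁) hμpos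
      have hx1 : p i₁ / μ k₀ ≠ 1 := by
        intro h
        exact hne ((div_eq_one_iff_eq hμpos.ne').1 h).symm
      have hlog := Real.log_lt_sub_one_of_pos hx hx1
      rw [Real.log_div (hp i₁).ne' hμpos.ne'] at hlog
      simp only [hF, hG]
      have : p i₁ * (q k₀ i₁ / μ k₀) = q k₀ i₁ * (p i₁ / μ k₀) := by ring
      rw [this]
      nlinarith [hq₀]
    have hFsum : ∑ k, ∑ i, F k i = (∑ k, μ k * Real.log (μ k)) - ∑ i, p i * Real.log (p i) := by
      have h1 : ∀ k, ∑ i, F k i = μ k * Real.log (μ k) - ∑ i, q k i * Real.log (p i) := by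
        intro k
        have : ∑ i, F k i = (∑ i, q k i) * Real.log (μ k) - ∑ i, q k i * Real.log (p i) := by
          rw [Finset.sum_mul, ← Finset.sum_sub_distrib]
          exact Finset.sum_congr rfl fun i _ => by rw [hF]; ring
        rw [this, hrow]
      simp only [h1]
      rw [Finset.sum_sub_distrib]
      congr 1
      rw [Finset.sum_comm]
      exact Finset.sum_congr rfl fun i _ => by rw [← Finset.sum_mul, hcol]
    have hGsum : 0 ≤ ∑ k, ∑ i, G k i := by
      have h1 : ∑ k, ∑ i, G k i = 1 - ∑ i, p i * ∑ k, q k i / μ k := by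
        rw [Finset.sum_comm]
        have : ∀ i, ∑ k, G k i = p i - p i * ∑ k, q k i / μ k := by
          intro i
          simp only [hG]
          rw [Finset.sum_sub_distrib, hcol, Finset.mul_sum]
        simp only [this]
        rw [Finset.sum_sub_distrib, hpsum]
      rw [h1, sub_nonneg, ← hpsum]
      exact Finset.sum_le_sum fun i _ => by
        calc p i * ∑ k, q k i / μ k ≤ p i * 1 := by
              exact mul_le_mul_of_nonneg_left (bessel i) (hp i).le
          _ = p i := mul_one _
    have hlt : ∑ k, ∑ i, G k i < ∑ k, ∑ i, F k i := by
      rw [← Finset.sum_product' (f := fun k i => G k i), ← Finset.sum_product' (f := fun k i => F k i)]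
      refine Finset.sum_lt_sum (fun x _ => key1 x.1 x.2) ⟨(k₀, i₁), Finset.mem_univ _, key2⟩
    have := lt_of_le_of_lt hGsum hlt
    rw [hFsum] at this
    linarith
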